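/- Let G be a group, N a normal subgroup of G, and p : G → G/N the canonical projection. Suppose that G/N is boundedly presented by a subset T ⊆ G/N, and let T' ⊆ G be a subset with p(T') = T. Then G is boundedly presented by the subset N ∪ T'. -/

import Mathlib

open scoped Pointwise

/-- A group `G` is *boundedly presented* by a subset `S ⊆ G` if there are an integer `n` and a
set `R` of words of length at most `n` in the letters `S ∪ S⁻¹`, each representing the identity
in `G`, such that the canonical homomorphism from the quotient of the free group on `S` by the
normal closure of `R` onto `G` is an isomorphism. -/
def BoundedlyPresentedBy (G : Type*) [Group G] (S : Set G) : Prop :=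
  ∃ (n : ℕ) (R : Set (FreeGroup S)),
    (∀ r ∈ R, ∃ w : List (S × Bool), FreeGroup.mk w = r ∧ w.length ≤ n) ∧
    Function.Surjective (FreeGroup.lift (fun s : S => (s : G))) ∧
    MonoidHom.ker (FreeGroup.lift (fun s : S => (s : G))) = Subgroup.normalClosure R

namespace BPAux

theorem of_inv_eq {α : Type*} (x : α) :
    (FreeGroup.of x)⁻¹ = FreeGroup.mk [(x, false)] := by
  rw [show FreeGroup.of x = FreeGroup.mk [(x, true)] from rfl, FreeGroup.inv_mk]
  rfl

theorem of_eq' {α : Type*} (x : α) : FreeGroup.of x = FreeGroup.mk [(x, true)] := rfl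

variable {G : Type*} [Group G] (N : Subgroup G) [N.Normal] (T' : Set G)

/-- The generating set `N ∪ T'`. -/
abbrev Sg : Set G := (N : Set G) ∪ T'

/-- Letter coming from `N`. -/
def eN (m : N) : FreeGroup (Sg N T') := FreeGroup.of ⟨(m : G), Or.inl m.2⟩

/-- Letter coming from `T'`. -/
def eT (t : T') : FreeGroup (Sg N T') := FreeGroup.of ⟨(t : G), Or.inr t.2⟩

/-- The evaluation homomorphism. -/
def phi0 : FreeGroup (Sg N T') →* G := FreeGroup.lift (fun s : Sg N T' => (s : G))

@[simp] theorem phi0_of (s : Sg N T') : phi0 N T' (FreeGroup.of s) = (s : G) :=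
  FreeGroup.lift_apply_of

@[simp] theorem phi0_eN (m : N) : phi0 N T' (eN N T' m) = (m : G) := FreeGroup.lift_apply_of

@[simp] theorem phi0_eT (t : T') : phi0 N T' (eT N T' t) = (t : G) := FreeGroup.lift_apply_of

/-- Conjugation inside `N`. -/
def cN (g : G) (m : N) : N := ⟨g * m * g⁻¹, Subgroup.Normal.conj_mem ‹N.Normal› m m.2 g⟩

variable {T : Set (G ⧸ N)}

/-- A choice of section of the projection restricted to `T'`. -/
noncomputable def sig (hT' : (QuotientGroup.mk : G → G ⧸ N) '' T' = T) (t : T) : G :=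
  Classical.choose (show ∃ g ∈ T', QuotientGroup.mk g = (t : G ⧸ N) by
    have h2 : ((t : G ⧸ N) ∈ (QuotientGroup.mk : G → G ⧸ N) '' T') := by
      rw [hT']; exact t.2
    obtain ⟨g, hg, hgeq⟩ := h2
    exact ⟨g, hg, hgeq⟩)

theorem sig_mem (hT' : (QuotientGroup.mk : G → G ⧸ N) '' T' = T) (t : T) :
    sig N T' hT' t ∈ T' :=
  (Classical.choose_spec (show ∃ g ∈ T', QuotientGroup.mk g = (t : G ⧸ N) by
    have h2 : ((t : G ⧸ N) ∈ (QuotientGroup.mk : G → G ⧸ N) '' T') := by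
      rw [hT']; exact t.2
    obtain ⟨g, hg, hgeq⟩ := h2
    exact ⟨g, hg, hgeq⟩)).1

theorem sig_eq (hT' : (QuotientGroup.mk : G → G ⧸ N) '' T' = T) (t : T) :
    QuotientGroup.mk (sig N T' hT' t) = (t : G ⧸ N) :=
  (Classical.choose_spec (show ∃ g ∈ T', QuotientGroup.mk g = (t : G ⧸ N) by
    have h2 : ((t : G ⧸ N) ∈ (QuotientGroup.mk : G → G ⧸ N) '' T') := by
      rw [hT']; exact t.2
    obtain ⟨g, hg, hgeq⟩ := h2
    exact ⟨g, hg, hgeq⟩)).2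

variable (hT' : (QuotientGroup.mk : G → G ⧸ N) '' T' = T)

/-- Section letter. -/
noncomputable def sSig (t : T) : Sg N T' := ⟨sig N T' hT' t, Or.inr (sig_mem N T' hT' t)⟩

/-- Induced map on free groups. -/
noncomputable def sigStar : FreeGroup T →* FreeGroup (Sg N T') :=
  FreeGroup.map (sSig N T' hT')

open scoped Classical in
/-- The `N`-part of a lifted relator. -/
noncomputable def nr (r : FreeGroup T) : N :=
  if h : phi0 N T' (sigStar N T' hT' r) ∈ N then ⟨_, h⟩ else 1

/-- Projection of an element of `T'` to `T`. -/
def tbar (t : T') : T :=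
  ⟨QuotientGroup.mk (t : G), by rw [← hT']; exact Set.mem_image_of_mem _ t.2⟩

/-- The `N`-part of an element of `T'` versus its chosen section. -/
noncomputable def nt (t : T') : N :=
  ⟨(t : G) * (sig N T' hT' (tbar N T' hT' t))⁻¹, by
    rw [← QuotientGroup.eq_one_iff, QuotientGroup.mk_mul, QuotientGroup.mk_inv,
      sig_eq N T' hT' (tbar N T' hT' t)]
    simp [tbar]⟩

/-- The relator set. -/
noncomputable def Rel (R : Set (FreeGroup T)) : Set (FreeGroup (Sg N T')) :=
  ((fun r => sigStar N T' hT' r * (eN N T' (nr N T' hT' r))⁻¹) '' R) ∪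
  {x | ∃ m k : N, x = eN N T' m * eN N T' k * (eN N T' (m * k))⁻¹} ∪
  {x | ∃ (t : T') (m : N),
    x = eT N T' t * eN N T' m * (eT N T' t)⁻¹ * (eN N T' (cN N (t : G) m))⁻¹} ∪
  {x | ∃ (t : T') (m : N),
    x = (eT N T' t)⁻¹ * eN N T' m * eT N T' t * (eN N T' (cN N (t : G)⁻¹ m))⁻¹} ∪
  {x | ∃ t : T',
    x = eT N T' t * (FreeGroup.of (sSig N T' hT' (tbar N T' hT' t)))⁻¹ *
      (eN N T' (nt N T' hT' t))⁻¹}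

/-- Compatibility: projecting a lifted word gives back the word's value. -/
theorem mk_phi0_sigStar (x : FreeGroup T) :
    (QuotientGroup.mk' N) (phi0 N T' (sigStar N T' hT' x)) =
      FreeGroup.lift (fun t : T => (t : G ⧸ N)) x := by
  have h : ((QuotientGroup.mk' N).comp ((phi0 N T').comp (sigStar N T' hT'))) =
      FreeGroup.lift (fun t : T => (t : G ⧸ N)) := by
    apply FreeGroup.ext_hom
    intro t
    simp only [MonoidHom.comp_apply, sigStar, FreeGroup.map.of, phi0_of, FreeGroup.lift_apply_of]
    exact sig_eq N T' hT' t
  exact DFunLike.congr_fun h x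

theorem nr_spec {r : FreeGroup T}
    (hr : FreeGroup.lift (fun t : T => (t : G ⧸ N)) r = 1) :
    ((nr N T' hT' r : N) : G) = phi0 N T' (sigStar N T' hT' r) := by
  have hmem : phi0 N T' (sigStar N T' hT' r) ∈ N := by
    rw [← QuotientGroup.eq_one_iff]
    rw [show (QuotientGroup.mk (phi0 N T' (sigStar N T' hT' r)) : G ⧸ N) =
      (QuotientGroup.mk' N) (phi0 N T' (sigStar N T' hT' r)) from rfl]
    rw [mk_phi0_sigStar N T' hT' r, hr]
  rw [nr, dif_pos hmem]

/-- Bounded length of the relator words. -/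
theorem rel_words {n : ℕ} {R : Set (FreeGroup T)}
    (hRword : ∀ r ∈ R, ∃ w : List (T × Bool), FreeGroup.mk w = r ∧ w.length ≤ n) :
    ∀ r ∈ Rel N T' hT' R,
      ∃ w : List ((Sg N T') × Bool), FreeGroup.mk w = r ∧ w.length ≤ n + 4 := by
  rintro r ((((⟨r0, hr0, rfl⟩ | ⟨m, k, rfl⟩) | ⟨t, m, rfl⟩) | ⟨t, m, rfl⟩) | ⟨t, rfl⟩)
  · obtain ⟨w, hw, hlen⟩ := hRword r0 hr0
    refine ⟨(w.map fun x => (sSig N T' hT' x.1, x.2)) ++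
      [(⟨(nr N T' hT' r0 : G), Or.inl (nr N T' hT' r0).2⟩, false)], ?_, ?_⟩
    · rw [← hw]
      simp [sigStar, FreeGroup.map.mk, eN, of_eq', FreeGroup.inv_mk, FreeGroup.invRev,
        FreeGroup.mul_mk]
    · simp only [List.length_append, List.length_map, List.length_singleton]
      omega
  · refine ⟨[(⟨(m : G), Or.inl m.2⟩, true), (⟨(k : G), Or.inl k.2⟩, true),
      (⟨((m * k : N) : G), Or.inl (m * k).2⟩, false)], ?_, by simp⟩
    simp [eN, of_eq', FreeGroup.inv_mk, FreeGroup.invRev, FreeGroup.mul_mk]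
  · refine ⟨[(⟨(t : G), Or.inr t.2⟩, true), (⟨(m : G), Or.inl m.2⟩, true),
      (⟨(t : G), Or.inr t.2⟩, false),
      (⟨((cN N (t : G) m : N) : G), Or.inl (cN N (t : G) m).2⟩, false)], ?_, by simp⟩
    simp [eN, eT, of_eq', FreeGroup.inv_mk, FreeGroup.invRev, FreeGroup.mul_mk]
  · refine ⟨[(⟨(t : G), Or.inr t.2⟩, false), (⟨(m : G), Or.inl m.2⟩, true),
      (⟨(t : G), Or.inr t.2⟩, true),
      (⟨((cN N (t : G)⁻¹ m : N) : G), Or.inl (cN N (t : G)⁻¹ m).2⟩, false)], ?_, by simp⟩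
    simp [eN, eT, of_eq', FreeGroup.inv_mk, FreeGroup.invRev, FreeGroup.mul_mk]
  · refine ⟨[(⟨(t : G), Or.inr t.2⟩, true),
      (sSig N T' hT' (tbar N T' hT' t), false),
      (⟨((nt N T' hT' t : N) : G), Or.inl (nt N T' hT' t).2⟩, false)], ?_, by simp⟩
    simp [eN, eT, of_eq', FreeGroup.inv_mk, FreeGroup.invRev, FreeGroup.mul_mk]

/-- Every relator evaluates to `1` in `G`. -/
theorem rel_subset_ker {R : Set (FreeGroup T)}
    (hR : ∀ r ∈ R, FreeGroup.lift (fun t : T => (t : G ⧸ N)) r = 1) :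
    ∀ x ∈ Rel N T' hT' R, x ∈ (phi0 N T').ker := by
  rintro x ((((⟨r0, hr0, rfl⟩ | ⟨m, k, rfl⟩) | ⟨t, m, rfl⟩) | ⟨t, m, rfl⟩) | ⟨t, rfl⟩) <;>
    rw [MonoidHom.mem_ker]
  · rw [map_mul, map_inv, phi0_eN, nr_spec N T' hT' (hR r0 hr0)]
    group
  · simp only [map_mul, map_inv, phi0_eN]
    push_cast
    group
  · simp only [map_mul, map_inv, phi0_eN, phi0_eT, cN]
    group
  · simp only [map_mul, map_inv, phi0_eN, phi0_eT, cN]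
    group
  · simp only [map_mul, map_inv, phi0_eN, phi0_eT, phi0_of, nt, sSig]
    group


theorem quot_eq {H : Type*} [Group H] (K : Subgroup H) [K.Normal] {x y : H}
    (h : x * y⁻¹ ∈ K) : (QuotientGroup.mk x : H ⧸ K) = QuotientGroup.mk y := by
  have h1 := (QuotientGroup.eq_one_iff (x * y⁻¹)).mpr h
  rw [QuotientGroup.mk_mul, QuotientGroup.mk_inv, mul_inv_eq_one] at h1
  exact h1

variable (R : Set (FreeGroup T))

/-- The normal closure of the relators. -/
noncomputable def KK : Subgroup (FreeGroup (Sg N T')) := Subgroup.normalClosure (Rel N T' hT' R)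

instance : (KK N T' hT' R).Normal := Subgroup.normalClosure_normal

/-- The homomorphism from `N` to the quotient by the relators. -/
noncomputable def nu : N →* FreeGroup (Sg N T') ⧸ KK N T' hT' R :=
  MonoidHom.mk' (fun m => QuotientGroup.mk (eN N T' m)) (by
    intro m k
    have hrel : eN N T' m * eN N T' k * (eN N T' (m * k))⁻¹ ∈ KK N T' hT' R :=
      Subgroup.subset_normalClosure (Or.inl (Or.inl (Or.inl (Or.inr ⟨m, k, rfl⟩))))
    have h1 := quot_eq (KK N T' hT' R) hrel
    rw [QuotientGroup.mk_mul] at h1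
    exact h1.symm)

theorem nu_apply (m : N) :
    nu N T' hT' R m = QuotientGroup.mk (eN N T' m) := rfl

theorem keyA (s : Sg N T') (m : N) :
    ∃ m' : N, (QuotientGroup.mk (FreeGroup.of s) : FreeGroup (Sg N T') ⧸ KK N T' hT' R) *
      nu N T' hT' R m * (QuotientGroup.mk (FreeGroup.of s))⁻¹ = nu N T' hT' R m' := by
  obtain ⟨g, hg⟩ := s
  rcases hg with hgN | hgT
  · refine ⟨⟨g, hgN⟩ * m * ⟨g, hgN⟩⁻¹, ?_⟩
    have h0 : (QuotientGroup.mk (FreeGroup.of (⟨g, Or.inl hgN⟩ : Sg N T')) :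
        FreeGroup (Sg N T') ⧸ KK N T' hT' R) = nu N T' hT' R ⟨g, hgN⟩ := rfl
    rw [h0, map_mul, map_mul, map_inv]
  · refine ⟨cN N g m, ?_⟩
    have hrel : eT N T' ⟨g, hgT⟩ * eN N T' m * (eT N T' ⟨g, hgT⟩)⁻¹ *
        (eN N T' (cN N g m))⁻¹ ∈ KK N T' hT' R :=
      Subgroup.subset_normalClosure (Or.inl (Or.inl (Or.inr ⟨⟨g, hgT⟩, m, rfl⟩)))
    have h1 := quot_eq (KK N T' hT' R) hrel
    rw [QuotientGroup.mk_mul, QuotientGroup.mk_mul, QuotientGroup.mk_inv] at h1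
    exact h1

theorem keyB (s : Sg N T') (m : N) :
    ∃ m' : N, (QuotientGroup.mk (FreeGroup.of s) : FreeGroup (Sg N T') ⧸ KK N T' hT' R)⁻¹ *
      nu N T' hT' R m * QuotientGroup.mk (FreeGroup.of s) = nu N T' hT' R m' := by
  obtain ⟨g, hg⟩ := s
  rcases hg with hgN | hgT
  · refine ⟨⟨g, hgN⟩⁻¹ * m * ⟨g, hgN⟩, ?_⟩
    have h0 : (QuotientGroup.mk (FreeGroup.of (⟨g, Or.inl hgN⟩ : Sg N T')) :
        FreeGroup (Sg N T') ⧸ KK N T' hT' R) = nu N T' hT' R ⟨g, hgN⟩ := rfl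
    rw [h0, map_mul, map_mul, map_inv]
  · refine ⟨cN N g⁻¹ m, ?_⟩
    have hrel : (eT N T' ⟨g, hgT⟩)⁻¹ * eN N T' m * eT N T' ⟨g, hgT⟩ *
        (eN N T' (cN N g⁻¹ m))⁻¹ ∈ KK N T' hT' R :=
      Subgroup.subset_normalClosure (Or.inl (Or.inr ⟨⟨g, hgT⟩, m, rfl⟩))
    have h1 := quot_eq (KK N T' hT' R) hrel
    rw [QuotientGroup.mk_mul, QuotientGroup.mk_mul, QuotientGroup.mk_inv] at h1
    exact h1

theorem nu_range_normal : (nu N T' hT' R).range.Normal := by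
  rw [← Subgroup.normalizer_eq_top_iff, eq_top_iff]
  intro q _
  induction q using QuotientGroup.induction_on with
  | H x =>
    induction x using FreeGroup.induction_on with
    | C1 =>
      exact Subgroup.one_mem _
    | of s =>
      refine Subgroup.mem_normalizer_iff.mpr fun h => ⟨fun hh => ?_, fun hh => ?_⟩
      · obtain ⟨m, rfl⟩ := MonoidHom.mem_range.mp hh
        obtain ⟨m', hm'⟩ := keyA N T' hT' R s m
        exact MonoidHom.mem_range.mpr ⟨m', hm'.symm⟩
      · obtain ⟨m, hm⟩ := MonoidHom.mem_range.mp hh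
        obtain ⟨m', hm'⟩ := keyB N T' hT' R s m
        refine MonoidHom.mem_range.mpr ⟨m', ?_⟩
        have hm2 : nu N T' hT' R m =
            (QuotientGroup.mk (FreeGroup.of s) : FreeGroup (Sg N T') ⧸ KK N T' hT' R) * h *
              (QuotientGroup.mk (FreeGroup.of s))⁻¹ := hm
        rw [← hm', hm2]
        group
    | inv_of s ih =>
      exact Subgroup.inv_mem _ (ih trivial)
    | mul x y ihx ihy =>
      exact Subgroup.mul_mem _ (ihx trivial) (ihy trivial)

include hT' in
theorem phi0_surj (hTsurj : Function.Surjective (FreeGroup.lift (fun t : T => (t : G ⧸ N)))) :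
    Function.Surjective (phi0 N T') := by
  rw [← MonoidHom.range_eq_top]
  have hrange : (phi0 N T').range = Subgroup.closure (Sg N T') := by
    rw [phi0, FreeGroup.range_lift_eq_closure, Subtype.range_coe]
  rw [hrange]
  have hTtop : Subgroup.closure T = ⊤ := by
    rw [← Subtype.range_coe (s := T), ← FreeGroup.range_lift_eq_closure]
    exact MonoidHom.range_eq_top.mpr hTsurj
  rw [eq_top_iff]
  intro g _
  have hmap : Subgroup.map (QuotientGroup.mk' N) (Subgroup.closure (Sg N T')) = ⊤ := by
    rw [eq_top_iff, ← hTtop]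
    rw [Subgroup.closure_le]
    intro q hq
    rw [← hT'] at hq
    obtain ⟨g', hg', rfl⟩ := hq
    exact ⟨g', Subgroup.subset_closure (Or.inr hg'), rfl⟩
  have hmem : (QuotientGroup.mk' N) g ∈
      Subgroup.map (QuotientGroup.mk' N) (Subgroup.closure (Sg N T')) := by
    rw [hmap]; trivial
  obtain ⟨h, hh, hhg⟩ := hmem
  have hN : h⁻¹ * g ∈ N := by
    rw [← QuotientGroup.eq]
    exact hhg
  have hgeq : g = h * (h⁻¹ * g) := by group
  rw [hgeq]
  exact Subgroup.mul_mem _ hh (Subgroup.subset_closure (Or.inl hN))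

theorem ker_eq (hTsurj : Function.Surjective (FreeGroup.lift (fun t : T => (t : G ⧸ N))))
    (hTker : (FreeGroup.lift (fun t : T => (t : G ⧸ N))).ker = Subgroup.normalClosure R) :
    (phi0 N T').ker = Subgroup.normalClosure (Rel N T' hT' R) := by
  have hR1 : ∀ r ∈ R, FreeGroup.lift (fun t : T => (t : G ⧸ N)) r = 1 := fun r hr => by
    rw [← MonoidHom.mem_ker, hTker]
    exact Subgroup.subset_normalClosure hr
  have hKle : KK N T' hT' R ≤ (phi0 N T').ker :=
    Subgroup.normalClosure_le_normal (rel_subset_ker N T' hT' hR1)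
  refine le_antisymm ?_ hKle
  haveI := nu_range_normal N T' hT' R
  set φ : (FreeGroup (Sg N T') ⧸ KK N T' hT' R) →* G :=
    QuotientGroup.lift _ (phi0 N T') hKle with hφdef
  set π := QuotientGroup.mk' (nu N T' hT' R).range with hπdef
  set ψ : FreeGroup T →* ((FreeGroup (Sg N T') ⧸ KK N T' hT' R) ⧸ (nu N T' hT' R).range) :=
    π.comp ((QuotientGroup.mk' (KK N T' hT' R)).comp (sigStar N T' hT')) with hψdef
  have hψR : ∀ r ∈ R, ψ r = 1 := by
    intro r hr
    have hrel : sigStar N T' hT' r * (eN N T' (nr N T' hT' r))⁻¹ ∈ KK N T' hT' R :=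
      Subgroup.subset_normalClosure (Or.inl (Or.inl (Or.inl (Or.inl ⟨r, hr, rfl⟩))))
    have h2 : (QuotientGroup.mk (sigStar N T' hT' r) :
        FreeGroup (Sg N T') ⧸ KK N T' hT' R) = nu N T' hT' R (nr N T' hT' r) :=
      quot_eq _ hrel
    show π (QuotientGroup.mk (sigStar N T' hT' r)) = 1
    rw [h2]
    exact (QuotientGroup.eq_one_iff _).mpr (MonoidHom.mem_range.mpr ⟨nr N T' hT' r, rfl⟩)
  have hψker : (FreeGroup.lift (fun t : T => (t : G ⧸ N))).ker ≤ ψ.ker := by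
    rw [hTker]
    exact Subgroup.normalClosure_le_normal (fun r hr => hψR r hr)
  set e := QuotientGroup.quotientKerEquivOfSurjective _ hTsurj with hedef
  set ψ' := QuotientGroup.lift _ ψ hψker with hψ'def
  set χ := ψ'.comp e.symm.toMonoidHom with hχdef
  have hχ : ∀ x : FreeGroup T, χ (FreeGroup.lift (fun t : T => (t : G ⧸ N)) x) = ψ x := by
    intro x
    have he : e (QuotientGroup.mk x) = FreeGroup.lift (fun t : T => (t : G ⧸ N)) x := rfl
    show ψ' (e.symm (FreeGroup.lift (fun t : T => (t : G ⧸ N)) x)) = ψ x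
    rw [← he, MulEquiv.symm_apply_apply]
    exact QuotientGroup.lift_mk' _ hψker x
  have hmain : ∀ y : FreeGroup (Sg N T'),
      χ (QuotientGroup.mk (phi0 N T' y)) = π (QuotientGroup.mk y) := by
    have hh : (χ.comp ((QuotientGroup.mk' N).comp (phi0 N T'))) =
        π.comp (QuotientGroup.mk' (KK N T' hT' R)) := by
      apply FreeGroup.ext_hom
      intro s
      obtain ⟨g, hg⟩ := s
      rcases hg with hgN | hgT
      · have h1 : ((QuotientGroup.mk g : G ⧸ N)) = 1 := (QuotientGroup.eq_one_iff g).mpr hgN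
        have h2 : (QuotientGroup.mk (FreeGroup.of (⟨g, Or.inl hgN⟩ : Sg N T')) :
            FreeGroup (Sg N T') ⧸ KK N T' hT' R) = nu N T' hT' R ⟨g, hgN⟩ := rfl
        simp only [MonoidHom.comp_apply, QuotientGroup.mk'_apply, phi0_of, h2]
        have h1' : (QuotientGroup.mk ((⟨g, Or.inl hgN⟩ : Sg N T') : G) : G ⧸ N) = 1 :=
          (QuotientGroup.eq_one_iff _).mpr hgN
        rw [h1', map_one]
        have h4 : π (nu N T' hT' R ⟨g, hgN⟩) = 1 :=
          (QuotientGroup.eq_one_iff _).mpr (MonoidHom.mem_range.mpr ⟨⟨g, hgN⟩, rfl⟩)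
        exact h4.symm
      · set t : T' := ⟨g, hgT⟩ with htdef
        have hrel : eT N T' t * (FreeGroup.of (sSig N T' hT' (tbar N T' hT' t)))⁻¹ *
            (eN N T' (nt N T' hT' t))⁻¹ ∈ KK N T' hT' R :=
          Subgroup.subset_normalClosure (Or.inr ⟨t, rfl⟩)
        have h1 := quot_eq (KK N T' hT' R) hrel
        rw [QuotientGroup.mk_mul, QuotientGroup.mk_inv] at h1
        -- apply π to h1
        have h2 : π (QuotientGroup.mk (eT N T' t)) =
            π (QuotientGroup.mk (FreeGroup.of (sSig N T' hT' (tbar N T' hT' t)))) := by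
          have h3 := congrArg π h1
          rw [map_mul, map_inv] at h3
          have h4 : π (QuotientGroup.mk (eN N T' (nt N T' hT' t))) = 1 :=
            (QuotientGroup.eq_one_iff _).mpr (MonoidHom.mem_range.mpr ⟨nt N T' hT' t, rfl⟩)
          rw [h4] at h3
          rw [mul_inv_eq_one] at h3
          exact h3
        simp only [MonoidHom.comp_apply, QuotientGroup.mk'_apply, phi0_of]
        have h5 : (QuotientGroup.mk ((⟨g, Or.inr hgT⟩ : Sg N T') : G) : G ⧸ N) =
            FreeGroup.lift (fun t : T => (t : G ⧸ N)) (FreeGroup.of (tbar N T' hT' t)) := by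
          rw [FreeGroup.lift_apply_of]
          rfl
        rw [h5, hχ]
        have h6 : ψ (FreeGroup.of (tbar N T' hT' t)) =
            π (QuotientGroup.mk (FreeGroup.of (sSig N T' hT' (tbar N T' hT' t)))) := rfl
        rw [h6, ← h2]
        rfl
    intro y
    exact DFunLike.congr_fun hh y
  intro x hx
  have hx1 : phi0 N T' x = 1 := hx
  have hπ : π (QuotientGroup.mk x) = 1 := by
    rw [← hmain x, hx1]
    simp
  have hmem : (QuotientGroup.mk x : FreeGroup (Sg N T') ⧸ KK N T' hT' R) ∈
      (nu N T' hT' R).range := by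
    rwa [← QuotientGroup.eq_one_iff]
  obtain ⟨m, hm⟩ := hmem
  have hφnu : φ (nu N T' hT' R m) = (m : G) := by
    rw [nu_apply]
    exact QuotientGroup.lift_mk' _ hKle (eN N T' m) |>.trans (phi0_eN N T' m)
  have hm1 : (m : G) = 1 := by
    rw [hm] at hφnu
    rw [QuotientGroup.lift_mk' _ hKle x] at hφnu
    rw [hx1] at hφnu
    exact hφnu.symm
  have hq1 : (QuotientGroup.mk x : FreeGroup (Sg N T') ⧸ KK N T' hT' R) = 1 := by
    rw [← hm, show m = 1 from Subtype.ext hm1, map_one]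
  exact (QuotientGroup.eq_one_iff x).mp hq1

end BPAux

/-- if `G / N` is boundedly presented by `T` and `T' ⊆ G` projects onto `T`, then
`G` is boundedly presented by the subset `N ∪ T'`. -/
theorem boundedlyPresentedBy_union_of_quotient {G : Type*} [Group G] (N : Subgroup G) [N.Normal]
    (T : Set (G ⧸ N)) (hT : BoundedlyPresentedBy (G ⧸ N) T)
    (T' : Set G) (hT' : (QuotientGroup.mk : G → G ⧸ N) '' T' = T) :
    BoundedlyPresentedBy G ((N : Set G) ∪ T') := by
  classical
  obtain ⟨n, R, hRword, hTsurj, hTker⟩ := hT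
  exact ⟨n + 4, BPAux.Rel N T' hT' R, BPAux.rel_words N T' hT' hRword,
    BPAux.phi0_surj N T' hT' hTsurj, BPAux.ker_eq N T' hT' R hTsurj hTker⟩
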